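/- arXiv:1308.6730 — 2 statements merged into one kernel-verified Lean document; each statement's English description precedes it below -/
import Mathlib

section
/- There exists a constant c > 0 such that the following holds. Let V be a finite type, G a simple graph on V, k a natural number with k ≥ 1, and suppose there is a map f : V → Fin (k²) such that f u ≠ f w for all distinct vertices u, w that are at distance at most 2 in G (i.e., u and w are adjacent, or there exists x adjacent to both u and w). Then there exists an injective map p : V → EuclideanSpace ℝ (Fin 3) with ‖p v‖ = 1 for all v, such that for every vertex v and every pair of distinct neighbors u, w of v in G, the angle between p u − p v and p w − p v is at least c/k. -/
open Real InnerProductGeometry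

lemma sphere_chord_angle {E : Type*} [NormedAddCommGroup E] [InnerProductSpace ℝ E]
    (a b x : E) (ha : ‖a‖ = 1) (hb : ‖b‖ = 1) (hx : ‖x‖ = 1)
    (hax : a ≠ x) (hbx : b ≠ x) :
    ‖a - b‖ / 2 ≤ angle (a - x) (b - x) := by
  set α : ℝ := inner ℝ a x with hα
  set β : ℝ := inner ℝ b x with hβ
  set γ : ℝ := inner ℝ a b with hγ
  have hxx : (inner ℝ x x : ℝ) = 1 := by
    rw [real_inner_self_eq_norm_sq, hx]; norm_num
  have hu : ‖a - α • x‖ ^ 2 = 1 - α ^ 2 := by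
    rw [norm_sub_sq_real, real_inner_smul_right, norm_smul, hx, ha]
    simp [hxx, ← hα]
    ring
  have hv : ‖b - β • x‖ ^ 2 = 1 - β ^ 2 := by
    rw [norm_sub_sq_real, real_inner_smul_right, norm_smul, hx, hb]
    simp [hxx, ← hβ]
    ring
  have hiuv : (inner ℝ (a - α • x) (b - β • x) : ℝ) = γ - α * β := by
    rw [hα, hβ, hγ]
    simp only [inner_sub_left, inner_sub_right, real_inner_smul_left, real_inner_smul_right,
      hxx, real_inner_comm x b, real_inner_comm x a]
    ring
  have gram : (γ - α * β) ^ 2 ≤ (1 - α ^ 2) * (1 - β ^ 2) := by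
    have h := abs_real_inner_le_norm (a - α • x) (b - β • x)
    have h2 : (inner ℝ (a - α • x) (b - β • x) : ℝ) ^ 2 ≤ (‖a - α • x‖ * ‖b - β • x‖) ^ 2 := by
      rw [← sq_abs]
      exact pow_le_pow_left₀ (abs_nonneg _) h 2
    rw [hiuv, mul_pow, hu, hv] at h2
    exact h2
  have hr1 : ‖a - x‖ ^ 2 = 2 - 2 * α := by
    rw [norm_sub_sq_real, ha, hx]; ring
  have hr2 : ‖b - x‖ ^ 2 = 2 - 2 * β := by
    rw [norm_sub_sq_real, hb, hx]; ring
  have hd : ‖a - b‖ ^ 2 = 2 - 2 * γ := by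
    rw [norm_sub_sq_real, ha, hb]; ring
  have huw : (inner ℝ (a - x) (b - x) : ℝ) = 1 - α - β + γ := by
    rw [hα, hβ, hγ]
    simp only [inner_sub_left, inner_sub_right, hxx, real_inner_comm x b, real_inner_comm x a]
    ring
  have hr1pos : 0 < ‖a - x‖ := by
    rw [norm_pos_iff, sub_ne_zero]; exact hax
  have hr2pos : 0 < ‖b - x‖ := by
    rw [norm_pos_iff, sub_ne_zero]; exact hbx
  have hdnn : 0 ≤ ‖a - b‖ := norm_nonneg _
  have hprod : (0:ℝ) < (‖a - x‖ * ‖b - x‖) ^ 2 := by positivity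
  have hR : (‖a - x‖ * ‖b - x‖) ^ 2 = (2 - 2*α) * (2 - 2*β) := by
    rw [mul_pow, hr1, hr2]
  have hq : (1 - α - β + γ) ^ 2 ≤ (1 - (‖a - b‖ / 2) ^ 2) * (‖a - x‖ * ‖b - x‖) ^ 2 := by
    rw [hR, div_pow, hd]
    nlinarith [gram]
  have hsin : ‖a - b‖ / 2 ≤ Real.sin (angle (a - x) (b - x)) := by
    rw [angle, Real.sin_arccos]
    have key : ((inner ℝ (a - x) (b - x) : ℝ) / (‖a - x‖ * ‖b - x‖)) ^ 2
        ≤ 1 - (‖a - b‖ / 2) ^ 2 := by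
      rw [div_pow, div_le_iff₀ hprod, huw]
      nlinarith [hq]
    calc ‖a - b‖ / 2 = Real.sqrt ((‖a - b‖ / 2) ^ 2) := by
          rw [Real.sqrt_sq (by positivity)]
      _ ≤ _ := Real.sqrt_le_sqrt (by linarith)
  have hang0 : 0 ≤ angle (a - x) (b - x) := angle_nonneg _ _
  by_cases h1 : 1 ≤ angle (a - x) (b - x)
  · have : ‖a - b‖ ≤ 2 := by
      calc ‖a - b‖ ≤ ‖a‖ + ‖b‖ := norm_sub_le _ _
        _ = 2 := by rw [ha, hb]; norm_num
    linarith
  · have := Real.sin_le hang0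
    linarith

noncomputable def xval (k N i n : ℕ) : ℝ :=
  (1 + (i / k : ℕ)) / (4 * k) + n * (1 / (16 * k * (N + 1)))

noncomputable def yval (k i : ℕ) : ℝ := (1 + (i % k : ℕ)) / (4 * k)

noncomputable def zval (k N i n : ℕ) : ℝ :=
  Real.sqrt (1 - xval k N i n ^ 2 - yval k i ^ 2)

noncomputable def pt (k N i n : ℕ) : EuclideanSpace ℝ (Fin 3) :=
  (WithLp.equiv 2 (Fin 3 → ℝ)).symm ![xval k N i n, yval k i, zval k N i n]

section bounds
variable {k N i n : ℕ}

lemma xval_bounds (hk : 1 ≤ k) (hi : i < k ^ 2) (hn : n ≤ N) :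
    1 / (4 * (k:ℝ)) ≤ xval k N i n ∧ xval k N i n ≤ 5 / 16 := by
  have hkR : (1:ℝ) ≤ (k:ℝ) := by exact_mod_cast hk
  have hkpos : (0:ℝ) < k := by linarith
  have hdiv : i / k < k := Nat.div_lt_of_lt_mul (by rwa [← sq])
  have h1 : (1:ℝ) + (i / k : ℕ) ≤ k := by
    have h : (i / k : ℕ) + 1 ≤ k := hdiv
    have h' : ((i / k : ℕ) : ℝ) + 1 ≤ (k:ℝ) := by exact_mod_cast h
    linarith
  have hNn : (n:ℝ) ≤ (N:ℝ) := by exact_mod_cast hn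
  have hc0 : (0:ℝ) ≤ ((i / k : ℕ) : ℝ) := Nat.cast_nonneg _
  constructor
  · unfold xval
    have h3 : 1 / (4 * (k:ℝ)) ≤ (1 + (i / k : ℕ)) / (4 * k) := by
      gcongr
      linarith
    have h4 : (0:ℝ) ≤ n * (1 / (16 * k * (N + 1))) := by positivity
    linarith
  · unfold xval
    have h3 : ((1:ℝ) + (i / k : ℕ)) / (4 * k) ≤ 1 / 4 := by
      rw [div_le_iff₀ (by positivity)]
      linarith
    have h4 : (n:ℝ) * (1 / (16 * k * (N + 1))) ≤ 1 / 16 := by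
      rw [mul_one_div, div_le_div_iff₀ (by positivity) (by norm_num)]
      have h5 : (n:ℝ) ≤ k * (N + 1) := by nlinarith [Nat.cast_nonneg (α := ℝ) N]
      linarith
    linarith

lemma yval_bounds (hk : 1 ≤ k) :
    1 / (4 * (k:ℝ)) ≤ yval k i ∧ yval k i ≤ 1 / 4 := by
  have hkR : (1:ℝ) ≤ (k:ℝ) := by exact_mod_cast hk
  have hkpos : (0:ℝ) < k := by linarith
  have hmod : i % k < k := Nat.mod_lt _ (by omega)
  have h1 : (1:ℝ) + (i % k : ℕ) ≤ k := by
    have h : (i % k : ℕ) + 1 ≤ k := hmod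
    have h' : ((i % k : ℕ) : ℝ) + 1 ≤ (k:ℝ) := by exact_mod_cast h
    linarith
  have hc0 : (0:ℝ) ≤ ((i % k : ℕ) : ℝ) := Nat.cast_nonneg _
  constructor
  · unfold yval
    gcongr
    linarith
  · unfold yval
    rw [div_le_iff₀ (by positivity)]
    linarith

lemma zval_sq (hk : 1 ≤ k) (hi : i < k ^ 2) (hn : n ≤ N) :
    zval k N i n ^ 2 = 1 - xval k N i n ^ 2 - yval k i ^ 2 := by
  obtain ⟨hx1, hx2⟩ := xval_bounds (N := N) (n := n) hk hi hn
  obtain ⟨hy1, hy2⟩ := yval_bounds (i := i) (k := k) hk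
  have hkR : (1:ℝ) ≤ (k:ℝ) := by exact_mod_cast hk
  have hx0 : 0 ≤ xval k N i n := le_trans (by positivity) hx1
  have hy0 : 0 ≤ yval k i := le_trans (by positivity) hy1
  unfold zval
  rw [Real.sq_sqrt]
  nlinarith

lemma norm_pt (hk : 1 ≤ k) (hi : i < k ^ 2) (hn : n ≤ N) : ‖pt k N i n‖ = 1 := by
  rw [pt, EuclideanSpace.norm_eq]
  simp only [WithLp.equiv_symm_apply, PiLp.toLp_apply, Fin.sum_univ_three, Real.norm_eq_abs, sq_abs]
  simp only [Matrix.cons_val_zero, Matrix.cons_val_one, Matrix.head_cons,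
    Matrix.cons_val_two, Matrix.tail_cons]
  rw [zval_sq hk hi hn]
  norm_num

lemma abs_coord_le_norm (q : EuclideanSpace ℝ (Fin 3)) (j : Fin 3) : |q j| ≤ ‖q‖ := by
  rw [EuclideanSpace.norm_eq]
  have h1 : |q j| = Real.sqrt (‖q j‖ ^ 2) := by
    rw [Real.norm_eq_abs, sq_abs, Real.sqrt_sq_eq_abs]
  rw [h1]
  apply Real.sqrt_le_sqrt
  exact Finset.single_le_sum (f := fun i => ‖q i‖ ^ 2) (fun i _ => by positivity) (Finset.mem_univ j)

lemma pt_sep (hk : 1 ≤ k) {j m : ℕ} (hi : i < k ^ 2) (hj : j < k ^ 2)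
    (hn : n ≤ N) (hm : m ≤ N) (hij : i ≠ j) :
    1 / (8 * (k:ℝ)) ≤ ‖pt k N i n - pt k N j m‖ := by
  have hkR : (1:ℝ) ≤ (k:ℝ) := by exact_mod_cast hk
  have hkpos : (0:ℝ) < k := by linarith
  have hsub : ∀ (l : Fin 3), (pt k N i n - pt k N j m) l = pt k N i n l - pt k N j m l :=
    fun l => rfl
  by_cases hmod : i % k = j % k
  · -- the x-coordinates are far apart
    have hdiv : i / k ≠ j / k := by
      intro h
      apply hij
      conv_lhs => rw [← Nat.div_add_mod i k]
      rw [h, hmod, Nat.div_add_mod]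
    have key : 1 / (8 * (k:ℝ)) ≤ |xval k N i n - xval k N j m| := by
      have hone : (1:ℝ) ≤ |((i / k : ℕ) : ℝ) - ((j / k : ℕ) : ℝ)| := by
        have hz : ((i / k : ℕ) : ℤ) - ((j / k : ℕ) : ℤ) ≠ 0 := by
          intro h
          exact hdiv (by exact_mod_cast sub_eq_zero.mp h)
        have h2 := Int.one_le_abs hz
        have h3 : (1:ℝ) ≤ |(((i / k : ℕ) : ℤ) - ((j / k : ℕ) : ℤ) : ℤ)| := by exact_mod_cast h2
        rwa [Int.cast_abs, Int.cast_sub, Int.cast_natCast, Int.cast_natCast] at h3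
      set A : ℝ := (((i / k : ℕ) : ℝ) - ((j / k : ℕ) : ℝ)) / (4 * k) with hA
      set B : ℝ := ((n:ℝ) - (m:ℝ)) * (1 / (16 * k * (N + 1))) with hB
      have heq : xval k N i n - xval k N j m = A + B := by
        rw [hA, hB]; unfold xval; ring
      have hpert : |B| ≤ 1 / (8 * k) := by
        rw [hB, abs_mul]
        have hn' : (n:ℝ) ≤ N := by exact_mod_cast hn
        have hm' : (m:ℝ) ≤ N := by exact_mod_cast hm
        have h0n : (0:ℝ) ≤ n := Nat.cast_nonneg _
        have h0m : (0:ℝ) ≤ m := Nat.cast_nonneg _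
        have h1 : |(n:ℝ) - m| ≤ (N:ℝ) + 1 := abs_sub_le_iff.mpr ⟨by linarith, by linarith⟩
        have h2 : |(1:ℝ) / (16 * k * (N + 1))| = 1 / (16 * k * (N + 1)) :=
          abs_of_pos (by positivity)
        rw [h2]
        calc |(n:ℝ) - m| * (1 / (16 * ↑k * (↑N + 1)))
            ≤ ((N:ℝ) + 1) * (1 / (16 * k * (N + 1))) := by gcongr
          _ = 1 / (16 * k) := by field_simp
          _ ≤ 1 / (8 * k) := by gcongr <;> linarith
      have hmain : 1 / (4 * (k:ℝ)) ≤ |A| := by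
        rw [hA, abs_div, abs_of_pos (by positivity : (0:ℝ) < 4 * (k:ℝ))]
        gcongr
      have habs : |A| ≤ |A + B| + |B| := by
        have := abs_add_le (A + B) (-B)
        simpa using this
      have h18 : 1 / (4 * (k:ℝ)) - 1 / (8 * k) = 1 / (8 * k) := by field_simp; ring
      rw [heq]
      linarith
    calc 1 / (8 * (k:ℝ)) ≤ |xval k N i n - xval k N j m| := key
      _ = |(pt k N i n - pt k N j m) 0| := by rw [hsub]; rfl
      _ ≤ ‖pt k N i n - pt k N j m‖ := abs_coord_le_norm _ 0
  · -- the y-coordinates are far apart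
    have key : 1 / (8 * (k:ℝ)) ≤ |yval k i - yval k j| := by
      have hone : (1:ℝ) ≤ |((i % k : ℕ) : ℝ) - ((j % k : ℕ) : ℝ)| := by
        have hz : ((i % k : ℕ) : ℤ) - ((j % k : ℕ) : ℤ) ≠ 0 := by
          intro h
          exact hmod (by exact_mod_cast sub_eq_zero.mp h)
        have h2 := Int.one_le_abs hz
        have h3 : (1:ℝ) ≤ |(((i % k : ℕ) : ℤ) - ((j % k : ℕ) : ℤ) : ℤ)| := by exact_mod_cast h2
        rwa [Int.cast_abs, Int.cast_sub, Int.cast_natCast, Int.cast_natCast] at h3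
      have heq : yval k i - yval k j = (((i % k : ℕ) : ℝ) - ((j % k : ℕ) : ℝ)) / (4 * k) := by
        unfold yval; ring
      rw [heq, abs_div, abs_of_pos (by positivity : (0:ℝ) < 4 * (k:ℝ))]
      calc (1:ℝ) / (8 * k) ≤ 1 / (4 * k) := by gcongr <;> linarith
        _ ≤ _ := by gcongr
    calc 1 / (8 * (k:ℝ)) ≤ |yval k i - yval k j| := key
      _ = |(pt k N i n - pt k N j m) 1| := by rw [hsub]; rfl
      _ ≤ ‖pt k N i n - pt k N j m‖ := abs_coord_le_norm _ 1

end bounds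

/-- The core of the proof of Theorem 1 of the paper and its corollary:
a proper coloring of the square of `G` with `k²` colors yields a 3D
straight-line drawing of `G` with all vertices on the unit sphere and
angular resolution at least `c / k`, for an absolute constant `c > 0`. -/
theorem exists_sphere_drawing_of_square_coloring :
    ∃ c : ℝ, 0 < c ∧
      ∀ (V : Type) [Fintype V] (G : SimpleGraph V) (k : ℕ), 1 ≤ k →
        ∀ f : V → Fin (k ^ 2),
          (∀ u w : V, u ≠ w →
              (G.Adj u w ∨ ∃ x, G.Adj u x ∧ G.Adj x w) → f u ≠ f w) →
          ∃ p : V → EuclideanSpace ℝ (Fin 3),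
            Function.Injective p ∧
            (∀ v, ‖p v‖ = 1) ∧
            ∀ v u w : V, G.Adj v u → G.Adj v w → u ≠ w →
              c / k ≤ angle (p u - p v) (p w - p v) := by
  refine ⟨1/16, by norm_num, ?_⟩
  intro V _ G k hk f hf
  classical
  set N := Fintype.card V with hN
  set e := Fintype.equivFin V with he
  set p : V → EuclideanSpace ℝ (Fin 3) := fun v => pt k N ((f v : ℕ)) ((e v : ℕ)) with hp
  have hkR : (0:ℝ) < k := by
    have : (1:ℝ) ≤ k := by exact_mod_cast hk
    linarith
  have hfi : ∀ v, (f v : ℕ) < k ^ 2 := fun v => (f v).isLt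
  have hei : ∀ v, (e v : ℕ) ≤ N := fun v => le_of_lt (e v).isLt
  have hsep : ∀ u w : V, f u ≠ f w → 1/(8*(k:ℝ)) ≤ ‖p u - p w‖ := by
    intro u w h
    exact pt_sep hk (hfi u) (hfi w) (hei u) (hei w) (fun hc => h (Fin.ext hc))
  have hnorm : ∀ v, ‖p v‖ = 1 := fun v => norm_pt hk (hfi v) (hei v)
  have hinj : Function.Injective p := by
    intro u w hpq
    by_contra hne
    by_cases hfc : f u = f w
    · have hee : ((e u : ℕ) : ℝ) ≠ ((e w : ℕ) : ℝ) := by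
        intro h
        have : (e u : ℕ) = (e w : ℕ) := by exact_mod_cast h
        exact hne (e.injective (Fin.ext this))
      have hx0 : p u 0 = p w 0 := congrArg (fun q : EuclideanSpace ℝ (Fin 3) => q 0) hpq
      have hx0' : xval k N (f u) (e u) = xval k N (f w) (e w) := hx0
      rw [hfc] at hx0'
      unfold xval at hx0'
      have hepos : (0:ℝ) < 1 / (16 * k * (N + 1)) := by positivity
      apply hee
      have : ((e u : ℕ) : ℝ) * (1 / (16 * ↑k * (↑N + 1)))
          = ((e w : ℕ) : ℝ) * (1 / (16 * ↑k * (↑N + 1))) := by linarith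
      exact mul_right_cancel₀ (ne_of_gt hepos) this
    · have h1 := hsep u w hfc
      rw [hpq, sub_self, norm_zero] at h1
      have : (0:ℝ) < 1/(8*(k:ℝ)) := by positivity
      linarith
  refine ⟨p, hinj, hnorm, ?_⟩
  intro v u w hvu hvw huw
  have h3 : f u ≠ f w := hf u w huw (Or.inr ⟨v, hvu.symm, hvw⟩)
  have hne1 : p u ≠ p v := fun h => G.ne_of_adj hvu (hinj h).symm
  have hne2 : p w ≠ p v := fun h => G.ne_of_adj hvw (hinj h).symm
  have ha := sphere_chord_angle (p u) (p w) (p v) (hnorm u) (hnorm w) (hnorm v) hne1 hne2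
  have hd := hsep u w h3
  have heq : (1/16:ℝ)/k = (1/(8*(k:ℝ)))/2 := by ring
  calc (1/16:ℝ)/k = (1/(8*(k:ℝ)))/2 := heq
    _ ≤ ‖p u - p w‖ / 2 := by linarith
    _ ≤ _ := ha
end

section
/- There exists a constant c > 0 such that the following holds. Let V be a finite type, G a simple graph on V, and d a natural number with 1 ≤ d and the maximum degree of G at most d. Let p : V → EuclideanSpace ℝ (Fin 3) be any injective map with p v 2 = 0 for every v (all vertices lie in the base plane z = 0), and let n denote the unit vector (0,0,1). Then there exists an assignment α : Sym2 V → ℝ with α e ∈ [0, π/4] for every e, such that for every vertex v and every pair of distinct neighbors u, w of v, the vectors T(v,u) = cos(α ⟦(v,u)⟧) • (‖p u − p v‖⁻¹ • (p u − p v)) + sin(α ⟦(v,u)⟧) • n and T(v,w) = cos(α ⟦(v,w)⟧) • (‖p w − p v‖⁻¹ • (p w − p v)) + sin(α ⟦(v,w)⟧) • n form an angle of at least c/d. -/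
open Real InnerProductGeometry

/-- The unit tangent vector at `p v` of the circular arc drawn over the
segment from `p v` to `p u` in the vertical plane through the two
endpoints, making angle `α s(v, u)` with the base plane. -/
noncomputable def arcTangentVec {V : Type*} (p : V → EuclideanSpace ℝ (Fin 3))
    (α : Sym2 V → ℝ) (nvec : EuclideanSpace ℝ (Fin 3)) (v u : V) :
    EuclideanSpace ℝ (Fin 3) :=
  Real.cos (α s(v, u)) • (‖p u - p v‖⁻¹ • (p u - p v)) +
    Real.sin (α s(v, u)) • nvec


lemma greedy_coloring : ∀ (n : ℕ) (W : Type) [Fintype W] [DecidableEq W]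
    (H : SimpleGraph W) [DecidableRel H.Adj] (N : ℕ),
    Fintype.card W ≤ n → (∀ w, H.degree w < N) →
    ∃ f : W → ℕ, (∀ w, f w < N) ∧ ∀ a b, H.Adj a b → f a ≠ f b := by
  intro n
  induction n with
  | zero =>
    intro W _ _ H _ N hcard _
    have hE : IsEmpty W := Fintype.card_eq_zero_iff.mp (Nat.le_zero.mp hcard)
    exact ⟨fun _ => 0, fun w => (hE.false w).elim, fun a _ h => (hE.false a).elim⟩
  | succ n ih =>
    intro W _ _ H _ N hcard hdeg
    rcases isEmpty_or_nonempty W with hE | hne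
    · exact ⟨fun _ => 0, fun w => (hE.false w).elim, fun a _ h => (hE.false a).elim⟩
    obtain ⟨w₀⟩ := hne
    let H' : SimpleGraph {w : W // w ≠ w₀} := H.comap Subtype.val
    haveI : DecidableRel H'.Adj := fun a b => ‹DecidableRel H.Adj› _ _
    have hcard' : Fintype.card {w : W // w ≠ w₀} ≤ n := by
      have h2 : Fintype.card {w : W // w ≠ w₀} < Fintype.card W :=
        Fintype.card_subtype_lt (x := w₀) (by simp)
      omega
    have hdeg' : ∀ a, H'.degree a < N := by
      intro a
      refine lt_of_le_of_lt ?_ (hdeg a.val)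
      apply Finset.card_le_card_of_injOn Subtype.val
      · intro b hb
        rw [Finset.mem_coe, SimpleGraph.mem_neighborFinset] at hb ⊢
        exact hb
      · exact Subtype.val_injective.injOn
    obtain ⟨f', hf'lt, hf'⟩ := ih {w : W // w ≠ w₀} H' N hcard' hdeg'
    let g : W → ℕ := fun u => if h : u = w₀ then 0 else f' ⟨u, h⟩
    let S : Finset ℕ := (H.neighborFinset w₀).image g
    have hS : S.card < N := lt_of_le_of_lt Finset.card_image_le (hdeg w₀)
    have hex : ∃ c, c ∈ Finset.range N ∧ c ∉ S := by
      have hsub : ¬ (Finset.range N ⊆ S) := fun h => by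
        have := Finset.card_le_card h
        rw [Finset.card_range] at this; omega
      exact Finset.not_subset.mp hsub
    obtain ⟨c, hcN, hcS⟩ := hex
    rw [Finset.mem_range] at hcN
    refine ⟨fun u => if h : u = w₀ then c else f' ⟨u, h⟩, ?_, ?_⟩
    · intro w
      by_cases h : w = w₀ <;> simp [h, hcN, hf'lt]
    · intro a b hab
      dsimp only
      by_cases ha : a = w₀
      · have hb : b ≠ w₀ := by intro h; rw [ha, h] at hab; exact H.irrefl hab
        rw [dif_pos ha, dif_neg hb]
        intro hcontra
        apply hcS
        refine Finset.mem_image.mpr ⟨b, ?_, ?_⟩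
        · rw [ha] at hab; exact (SimpleGraph.mem_neighborFinset _ _ _).mpr hab
        · show g b = c
          simp only [g, dif_neg hb]
          exact hcontra.symm
      · by_cases hb : b = w₀
        · rw [dif_neg ha, dif_pos hb]
          intro hcontra
          apply hcS
          refine Finset.mem_image.mpr ⟨a, ?_, ?_⟩
          · rw [hb] at hab; exact (SimpleGraph.mem_neighborFinset _ _ _).mpr hab.symm
          · show g a = c
            simp only [g, dif_neg ha]
            exact hcontra
        · rw [dif_neg ha, dif_neg hb]
          exact hf' ⟨a, ha⟩ ⟨b, hb⟩ hab


/-- Conflict graph on potential edges: two members of `Sym2 V` conflict if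
both are edges of `G` and they share a vertex. -/
def conflictGraph {V : Type} (G : SimpleGraph V) : SimpleGraph (Sym2 V) where
  Adj e f := e ≠ f ∧ e ∈ G.edgeSet ∧ f ∈ G.edgeSet ∧ ∃ v, v ∈ e ∧ v ∈ f
  symm := by
    constructor
    rintro e f ⟨h1, h2, h3, v, hv1, hv2⟩
    exact ⟨h1.symm, h3, h2, v, hv2, hv1⟩
  loopless := ⟨fun e h => h.1 rfl⟩

lemma conflictGraph_degree_lt {V : Type} [Fintype V] [DecidableEq V]
    (G : SimpleGraph V) [DecidableRel G.Adj]
    [DecidableRel (conflictGraph G).Adj] {d : ℕ} (hd : 1 ≤ d)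
    (hdeg : ∀ v, G.degree v ≤ d) (e : Sym2 V) :
    (conflictGraph G).degree e < 2 * d := by
  by_cases he : e ∈ G.edgeSet
  · induction e with
    | _ a b =>
    have hab : G.Adj a b := he
    set T : Finset (Sym2 V) :=
      (G.neighborFinset a).image (fun x => s(a, x)) ∪
        (G.neighborFinset b).image (fun x => s(b, x)) with hT
    have hsub : insert s(a, b) ((conflictGraph G).neighborFinset s(a, b)) ⊆ T := by
      intro f hf
      rcases Finset.mem_insert.mp hf with rfl | hf
      · apply Finset.mem_union_left
        exact Finset.mem_image.mpr ⟨b, (G.mem_neighborFinset a b).mpr hab, rfl⟩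
      · rw [SimpleGraph.mem_neighborFinset] at hf
        obtain ⟨hne, _, hfE, v, hve, hvf⟩ := hf
        induction f with
        | _ x y =>
        have hxy : G.Adj x y := hfE
        rcases Sym2.mem_iff.mp hve with rfl | rfl
        · -- v = a
          apply Finset.mem_union_left
          rcases Sym2.mem_iff.mp hvf with rfl | rfl
          · exact Finset.mem_image.mpr ⟨y, (G.mem_neighborFinset v y).mpr hxy, rfl⟩
          · exact Finset.mem_image.mpr ⟨x, (G.mem_neighborFinset v x).mpr hxy.symm,
              by rw [Sym2.eq_swap]⟩
        · -- v = b
          apply Finset.mem_union_right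
          rcases Sym2.mem_iff.mp hvf with rfl | rfl
          · exact Finset.mem_image.mpr ⟨y, (G.mem_neighborFinset v y).mpr hxy, rfl⟩
          · exact Finset.mem_image.mpr ⟨x, (G.mem_neighborFinset v x).mpr hxy.symm,
              by rw [Sym2.eq_swap]⟩
    have hnotmem : s(a, b) ∉ (conflictGraph G).neighborFinset s(a, b) := by
      rw [SimpleGraph.mem_neighborFinset]
      exact (conflictGraph G).irrefl
    have hcard : (conflictGraph G).degree s(a, b) + 1 ≤ T.card := by
      rw [SimpleGraph.degree, ← Finset.card_insert_of_notMem hnotmem]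
      exact Finset.card_le_card hsub
    have hTcard : T.card ≤ 2 * d := by
      calc T.card ≤ ((G.neighborFinset a).image (fun x => s(a, x))).card +
          ((G.neighborFinset b).image (fun x => s(b, x))).card := Finset.card_union_le _ _
        _ ≤ G.degree a + G.degree b := by
            exact Nat.add_le_add Finset.card_image_le Finset.card_image_le
        _ ≤ d + d := Nat.add_le_add (hdeg a) (hdeg b)
        _ = 2 * d := by ring
    omega
  · have : (conflictGraph G).neighborFinset e = ∅ := by
      ext f
      simp only [SimpleGraph.mem_neighborFinset, Finset.notMem_empty, iff_false]
      rintro ⟨_, h2, _⟩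
      exact he h2
    rw [SimpleGraph.degree, this]
    simp
    omega



lemma tangent_norm_one (x : EuclideanSpace ℝ (Fin 3)) (hx : x ≠ 0)
    (hx2 : x 2 = 0) (θ : ℝ) :
    ‖Real.cos θ • (‖x‖⁻¹ • x) +
      Real.sin θ • (EuclideanSpace.single 2 1 : EuclideanSpace ℝ (Fin 3))‖ = 1 := by
  set u : EuclideanSpace ℝ (Fin 3) := ‖x‖⁻¹ • x with hu_def
  have hu : ‖u‖ = 1 := norm_smul_inv_norm hx
  have hn : ‖(EuclideanSpace.single 2 1 : EuclideanSpace ℝ (Fin 3))‖ = 1 := by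
    simp
  have hinner : (inner ℝ u (EuclideanSpace.single 2 1 : EuclideanSpace ℝ (Fin 3)) : ℝ) = 0 := by
    rw [EuclideanSpace.inner_single_right]
    simp only [hu_def, PiLp.smul_apply, smul_eq_mul, hx2, mul_zero]
    simp
  have hsq : ‖Real.cos θ • u + Real.sin θ •
      (EuclideanSpace.single 2 1 : EuclideanSpace ℝ (Fin 3))‖ ^ 2 = 1 := by
    rw [norm_add_sq_real, real_inner_smul_left, real_inner_smul_right, hinner,
      norm_smul, hu, norm_smul, hn]
    simp only [mul_zero, mul_one, Real.norm_eq_abs, sq_abs]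
    nlinarith [Real.sin_sq_add_cos_sq θ]
  calc ‖Real.cos θ • u + Real.sin θ •
        (EuclideanSpace.single 2 1 : EuclideanSpace ℝ (Fin 3))‖
      = Real.sqrt (‖Real.cos θ • u + Real.sin θ •
        (EuclideanSpace.single 2 1 : EuclideanSpace ℝ (Fin 3))‖ ^ 2) :=
        (Real.sqrt_sq (norm_nonneg _)).symm
    _ = 1 := by rw [hsq]; exact Real.sqrt_one

lemma coord_le_norm (y : EuclideanSpace ℝ (Fin 3)) : |y 2| ≤ ‖y‖ := by
  have h := abs_real_inner_le_norm y (EuclideanSpace.single 2 1 : EuclideanSpace ℝ (Fin 3))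
  rw [EuclideanSpace.inner_single_right] at h
  simpa using h

lemma norm_sub_le_angle {a b : EuclideanSpace ℝ (Fin 3)}
    (ha : ‖a‖ = 1) (hb : ‖b‖ = 1) : ‖a - b‖ ≤ angle a b := by
  set θ := angle a b with hθ
  have hθ0 : 0 ≤ θ := angle_nonneg a b
  have hcos : Real.cos θ = (inner ℝ a b : ℝ) := by
    rw [hθ, cos_angle, ha, hb]; ring
  have hsq : ‖a - b‖ ^ 2 = 2 - 2 * Real.cos θ := by
    rw [norm_sub_sq_real, ha, hb, hcos]; ring
  have hb2 : 2 - 2 * Real.cos θ ≤ θ ^ 2 := by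
    have := Real.one_sub_sq_div_two_le_cos (x := θ)
    nlinarith
  calc ‖a - b‖ = Real.sqrt (‖a - b‖ ^ 2) := (Real.sqrt_sq (norm_nonneg _)).symm
    _ ≤ Real.sqrt (θ ^ 2) := Real.sqrt_le_sqrt (by linarith)
    _ = θ := Real.sqrt_sq hθ0

/-- Theorem 3 of the paper: there is a constant `c > 0` such that for any
graph `G` of maximum degree at most `d ≥ 1` and any injective placement
of its vertices in the base plane `z = 0`, one can choose arc angles
`α e ∈ [0, π/4]` so that the resulting 3D arc diagram (whose arcs project
perpendicularly onto the given segments) has angular resolution at least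
`c / d`. -/

theorem exists_arc_diagram_angular_resolution :
    ∃ c : ℝ, 0 < c ∧
      ∀ (V : Type) [Fintype V] (G : SimpleGraph V) [DecidableRel G.Adj] (d : ℕ),
        1 ≤ d → G.maxDegree ≤ d →
        ∀ p : V → EuclideanSpace ℝ (Fin 3), Function.Injective p →
          (∀ v, p v 2 = 0) →
          ∃ α : Sym2 V → ℝ,
            (∀ e, α e ∈ Set.Icc 0 (π / 4)) ∧
            ∀ v u w : V, G.Adj v u → G.Adj v w → u ≠ w →
              c / d ≤ angle
                (arcTangentVec p α (EuclideanSpace.single 2 1) v u)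
                (arcTangentVec p α (EuclideanSpace.single 2 1) v w) := by
  refine ⟨1/4, by norm_num, ?_⟩
  intro V _ G _ d hd hmax p hp hp2
  classical
  haveI : DecidableRel (conflictGraph G).Adj := Classical.decRel _
  have hdegG : ∀ v, G.degree v ≤ d :=
    fun v => le_trans (SimpleGraph.degree_le_maxDegree G v) hmax
  obtain ⟨col, hcol_lt, hcol⟩ := greedy_coloring (Fintype.card (Sym2 V)) (Sym2 V)
    (conflictGraph G) (2 * d) le_rfl
    (fun e => conflictGraph_degree_lt G hd hdegG e)
  have hd0 : (0:ℝ) < d := by exact_mod_cast hd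
  have h4d : (0:ℝ) < 4 * d := by linarith
  set α : Sym2 V → ℝ := fun e => Real.arcsin ((col e : ℝ) / (4 * d)) with hα
  have hx0 : ∀ e, 0 ≤ (col e : ℝ) / (4 * d) := fun e => by positivity
  have hx1 : ∀ e, (col e : ℝ) / (4 * d) ≤ 1/2 := by
    intro e
    rw [div_le_iff₀ h4d]
    have : (col e : ℝ) ≤ 2 * d := by exact_mod_cast (hcol_lt e).le
    linarith
  have hsin : ∀ e, Real.sin (α e) = (col e : ℝ) / (4 * d) := fun e =>
    Real.sin_arcsin (by linarith [hx0 e]) (by linarith [hx1 e])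
  refine ⟨α, ?_, ?_⟩
  · intro e
    refine ⟨Real.arcsin_nonneg.mpr (hx0 e), ?_⟩
    have hs2 : (1:ℝ)/2 ≤ Real.sqrt 2 / 2 := by
      nlinarith [Real.sq_sqrt (by norm_num : (0:ℝ) ≤ 2), Real.sqrt_nonneg 2]
    have h1 : α e ≤ Real.arcsin (Real.sqrt 2 / 2) :=
      Real.monotone_arcsin (le_trans (hx1 e) hs2)
    have h2 : Real.arcsin (Real.sqrt 2 / 2) = π / 4 := by
      rw [← Real.sin_pi_div_four]
      exact Real.arcsin_sin (by linarith [Real.pi_pos]) (by linarith [Real.pi_pos])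
    rw [← h2]; exact h1
  · intro v u w hvu hvw huw
    have hxu : p u - p v ≠ 0 := sub_ne_zero.mpr (fun h => hvu.ne' (hp h))
    have hxw : p w - p v ≠ 0 := sub_ne_zero.mpr (fun h => hvw.ne' (hp h))
    have hzu : (p u - p v) 2 = 0 := by simp [hp2]
    have hzw : (p w - p v) 2 = 0 := by simp [hp2]
    set A := arcTangentVec p α (EuclideanSpace.single 2 1) v u with hA
    set B := arcTangentVec p α (EuclideanSpace.single 2 1) v w with hB
    have hA1 : ‖A‖ = 1 := tangent_norm_one _ hxu hzu _
    have hB1 : ‖B‖ = 1 := tangent_norm_one _ hxw hzw _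
    have hAz : A 2 = Real.sin (α s(v, u)) := by
      rw [hA]
      simp [arcTangentVec, EuclideanSpace.single_apply, hzu, mul_comm]
    have hBz : B 2 = Real.sin (α s(v, w)) := by
      rw [hB]
      simp [arcTangentVec, EuclideanSpace.single_apply, hzw, mul_comm]
    have hne : col s(v, u) ≠ col s(v, w) := by
      apply hcol
      refine ⟨?_, ?_, ?_, v, ?_, ?_⟩
      · intro h
        exact huw (Sym2.congr_right.mp h)
      · exact (SimpleGraph.mem_edgeSet G).mpr hvu
      · exact (SimpleGraph.mem_edgeSet G).mpr hvw
      · exact Sym2.mem_mk_left v u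
      · exact Sym2.mem_mk_left v w
    have hz : (1:ℝ) ≤ |(col s(v, u) : ℝ) - (col s(v, w) : ℝ)| := by
      have hne' : (col s(v, u) : ℤ) - (col s(v, w) : ℤ) ≠ 0 :=
        sub_ne_zero.mpr (by exact_mod_cast hne)
      have h := Int.one_le_abs hne'
      exact_mod_cast h
    have hgap : 1 / (4 * (d:ℝ)) ≤ |A 2 - B 2| := by
      rw [hAz, hBz, hsin, hsin, div_sub_div_same, abs_div, abs_of_pos h4d]
      gcongr
    calc (1/4 : ℝ) / d = 1 / (4 * d) := by ring
      _ ≤ |A 2 - B 2| := hgap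
      _ = |(A - B) 2| := by simp
      _ ≤ ‖A - B‖ := coord_le_norm _
      _ ≤ angle A B := norm_sub_le_angle hA1 hB1
end
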